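/- Let m ≥ 1, δ > 0, and let M be an m×m real symmetric positive definite matrix. Define K(M) = (1/2)Tr(M) − (δ/2)·log det(M) − mδ/2 + (mδ/2)·log δ. Then K(M) is the greatest element of the set { Tr(Θ·M) + (δ/2)·log det(I − 2Θ) : Θ an m×m real symmetric matrix such that I − 2Θ is positive definite }, and the supremum is attained at Θ₀ = (1/2)(I − δ·M⁻¹), i.e. at the Θ₀ with M = δ·(I − 2Θ₀)⁻¹. -/

import Mathlib

open Matrix

private lemma trace_eq_sum_eig {n : Type*} [Fintype n] [DecidableEq n] {A : Matrix n n ℝ}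
    (hA : A.IsHermitian) : A.trace = ∑ i, hA.eigenvalues i := by
  nth_rewrite 1 [hA.spectral_theorem]
  rw [Unitary.conjStarAlgAut_apply, Matrix.trace_mul_cycle, Unitary.coe_star_mul_self,
    Matrix.one_mul, Matrix.trace_diagonal]
  simp

private lemma posdef_smul {n : Type*} [Fintype n] [DecidableEq n] {A : Matrix n n ℝ}
    (hA : A.PosDef) {c : ℝ} (hc : 0 < c) : (c • A).PosDef := by
  refine Matrix.posDef_iff_dotProduct_mulVec.mpr ⟨?_, fun x hx => ?_⟩
  · unfold Matrix.IsHermitian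
    rw [Matrix.conjTranspose_smul, hA.1]
    simp
  · rw [Matrix.smul_mulVec, dotProduct_smul, smul_eq_mul]
    exact mul_pos hc (hA.dotProduct_mulVec_pos hx)

private lemma posdef_sandwich {n : Type*} [Fintype n] [DecidableEq n] {M S : Matrix n n ℝ}
    (hM : M.PosDef) (hS : S.IsHermitian) (hSdet : IsUnit S.det) : (S * M * S).PosDef := by
  refine Matrix.posDef_iff_dotProduct_mulVec.mpr ⟨?_, fun x hx => ?_⟩
  · unfold Matrix.IsHermitian
    rw [Matrix.conjTranspose_mul, Matrix.conjTranspose_mul, hS.eq, hM.1.eq, Matrix.mul_assoc]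
  · have hinj : Function.Injective (S.mulVec) :=
      Matrix.mulVec_injective_iff_isUnit.mpr ((Matrix.isUnit_iff_isUnit_det S).mpr hSdet)
    have hSx : S *ᵥ x ≠ 0 := fun h => hx (hinj (by simpa using h))
    have key : (star x) ⬝ᵥ (S * M * S) *ᵥ x = star (S *ᵥ x) ⬝ᵥ M *ᵥ (S *ᵥ x) := by
      rw [← Matrix.mulVec_mulVec, ← Matrix.mulVec_mulVec, Matrix.dotProduct_mulVec,
        star_mulVec, hS.eq]
    rw [key]
    exact hM.dotProduct_mulVec_pos hSx

/-- The key scalar estimate summed over the eigenvalues of a positive definite matrix. -/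
private lemma key_bound {n : ℕ} {B : Matrix (Fin n) (Fin n) ℝ} (hB : B.PosDef)
    {δ : ℝ} (hδ : 0 < δ) :
    (δ / 2) * Real.log B.det - (1 / 2) * B.trace
      ≤ (n : ℝ) * ((δ / 2) * Real.log δ - δ / 2) := by
  have hev : ∀ i, 0 < hB.1.eigenvalues i := hB.eigenvalues_pos
  have hdet : B.det = ∏ i, hB.1.eigenvalues i := by
    have := hB.1.det_eq_prod_eigenvalues
    simpa using this
  have hlog : Real.log B.det = ∑ i, Real.log (hB.1.eigenvalues i) := by
    rw [hdet, Real.log_prod (fun i _ => (hev i).ne')]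
  rw [hlog, trace_eq_sum_eig hB.1, Finset.mul_sum, Finset.mul_sum, ← Finset.sum_sub_distrib]
  have : ((n : ℝ)) * ((δ / 2) * Real.log δ - δ / 2)
      = ∑ _i : Fin n, ((δ / 2) * Real.log δ - δ / 2) := by
    simp [Finset.sum_const, mul_comm]
    ring
  rw [this]
  refine Finset.sum_le_sum fun i _ => ?_
  set lam := hB.1.eigenvalues i with hlam
  have hl : 0 < lam := hev i
  have h1 : Real.log (lam / δ) ≤ lam / δ - 1 :=
    Real.log_le_sub_one_of_pos (by positivity)
  have h2 : Real.log lam - Real.log δ ≤ lam / δ - 1 := by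
    rwa [Real.log_div hl.ne' hδ.ne'] at h1
  have h3 : δ * (Real.log lam - Real.log δ) ≤ δ * (lam / δ - 1) :=
    mul_le_mul_of_nonneg_left h2 hδ.le
  have h4 : δ * (lam / δ - 1) = lam - δ := by field_simp
  nlinarith [h3]

theorem stmt_11 (m : ℕ) (hm : 1 ≤ m) (δ : ℝ) (hδ : 0 < δ)
    (M : Matrix (Fin m) (Fin m) ℝ) (hM : M.PosDef) :
    IsGreatest
      { x : ℝ | ∃ Θ : Matrix (Fin m) (Fin m) ℝ, Θ.IsSymm ∧
          ((1 : Matrix (Fin m) (Fin m) ℝ) - (2:ℝ) • Θ).PosDef ∧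
          x = (Θ * M).trace + (δ / 2) * Real.log ((1 : Matrix (Fin m) (Fin m) ℝ) - (2:ℝ) • Θ).det }
      ((1 / 2) * M.trace - (δ / 2) * Real.log M.det - m * δ / 2 + (m * δ / 2) * Real.log δ) ∧
    (((1:ℝ)/2) • ((1 : Matrix (Fin m) (Fin m) ℝ) - δ • M⁻¹)).IsSymm ∧
    ((1 : Matrix (Fin m) (Fin m) ℝ)
        - (2:ℝ) • (((1:ℝ)/2) • ((1 : Matrix (Fin m) (Fin m) ℝ) - δ • M⁻¹))).PosDef ∧
    M = δ • ((1 : Matrix (Fin m) (Fin m) ℝ)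
        - (2:ℝ) • (((1:ℝ)/2) • ((1 : Matrix (Fin m) (Fin m) ℝ) - δ • M⁻¹)))⁻¹ ∧
    ((((1:ℝ)/2) • ((1 : Matrix (Fin m) (Fin m) ℝ) - δ • M⁻¹)) * M).trace
        + (δ / 2) * Real.log ((1 : Matrix (Fin m) (Fin m) ℝ)
            - (2:ℝ) • (((1:ℝ)/2) • ((1 : Matrix (Fin m) (Fin m) ℝ) - δ • M⁻¹))).det
      = (1 / 2) * M.trace - (δ / 2) * Real.log M.det - m * δ / 2 + (m * δ / 2) * Real.log δ := by
  have hMdet : 0 < M.det := hM.det_pos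
  have hMinv : M⁻¹.PosDef := hM.inv
  -- simplification of 1 - 2 • Θ₀
  have hA0 : (1 : Matrix (Fin m) (Fin m) ℝ)
      - (2:ℝ) • (((1:ℝ)/2) • ((1 : Matrix (Fin m) (Fin m) ℝ) - δ • M⁻¹)) = δ • M⁻¹ := by
    rw [smul_smul]
    norm_num
  have hMinvM : M⁻¹ * M = 1 := Matrix.nonsing_inv_mul M (isUnit_iff_ne_zero.mpr hMdet.ne')
  -- symmetry of Θ₀
  have hsymm : (((1:ℝ)/2) • ((1 : Matrix (Fin m) (Fin m) ℝ) - δ • M⁻¹)).IsSymm := by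
    unfold Matrix.IsSymm
    rw [Matrix.transpose_smul, Matrix.transpose_sub, Matrix.transpose_smul,
      Matrix.transpose_nonsing_inv, Matrix.transpose_one]
    have : Mᵀ = M := by
      have := hM.1.eq
      simpa [Matrix.conjTranspose_eq_transpose_of_trivial] using this
    rw [this]
  have hpos : ((1 : Matrix (Fin m) (Fin m) ℝ)
      - (2:ℝ) • (((1:ℝ)/2) • ((1 : Matrix (Fin m) (Fin m) ℝ) - δ • M⁻¹))).PosDef := by
    rw [hA0]; exact posdef_smul hMinv hδ
  -- value at Θ₀
  have htrace0 : ((((1:ℝ)/2) • ((1 : Matrix (Fin m) (Fin m) ℝ) - δ • M⁻¹)) * M).trace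
      = (1/2) * M.trace - m * δ / 2 := by
    rw [Matrix.smul_mul, Matrix.sub_mul, Matrix.smul_mul, hMinvM, Matrix.one_mul]
    rw [Matrix.trace_smul, Matrix.trace_sub, Matrix.trace_smul, Matrix.trace_one]
    simp [smul_eq_mul, Finset.card_univ]
    ring
  have hdet0 : Real.log ((1 : Matrix (Fin m) (Fin m) ℝ)
      - (2:ℝ) • (((1:ℝ)/2) • ((1 : Matrix (Fin m) (Fin m) ℝ) - δ • M⁻¹))).det
      = m * Real.log δ - Real.log M.det := by
    rw [hA0, Matrix.det_smul, Matrix.det_nonsing_inv, Ring.inverse_eq_inv']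
    rw [Real.log_mul (pow_ne_zero _ hδ.ne') (inv_ne_zero hMdet.ne'), Real.log_pow, Real.log_inv]
    simp [Fintype.card_fin]
    ring
  have hval : ((((1:ℝ)/2) • ((1 : Matrix (Fin m) (Fin m) ℝ) - δ • M⁻¹)) * M).trace
        + (δ / 2) * Real.log ((1 : Matrix (Fin m) (Fin m) ℝ)
            - (2:ℝ) • (((1:ℝ)/2) • ((1 : Matrix (Fin m) (Fin m) ℝ) - δ • M⁻¹))).det
      = (1 / 2) * M.trace - (δ / 2) * Real.log M.det - m * δ / 2 + (m * δ / 2) * Real.log δ := by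
    rw [htrace0, hdet0]; ring
  refine ⟨⟨⟨((1:ℝ)/2) • ((1 : Matrix (Fin m) (Fin m) ℝ) - δ • M⁻¹), hsymm, hpos, hval.symm⟩, ?_⟩,
    hsymm, hpos, ?_, hval⟩
  · -- upper bound
    rintro x ⟨Θ, hΘsymm, hΘpos, rfl⟩
    set A : Matrix (Fin m) (Fin m) ℝ := (1 : Matrix (Fin m) (Fin m) ℝ) - (2:ℝ) • Θ with hAdef
    open scoped MatrixOrder in
    set S : Matrix (Fin m) (Fin m) ℝ := CFC.sqrt A with hSdef
    open scoped MatrixOrder in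
    have hShermitian : S.IsHermitian := (CFC.sqrt_nonneg A).posSemidef.1
    open scoped MatrixOrder in
    have hSS : S * S = A := CFC.sqrt_mul_sqrt_self A hΘpos.posSemidef.nonneg
    have hAdetpos : 0 < A.det := hΘpos.det_pos
    have hSdet : S.det * S.det = A.det := by rw [← Matrix.det_mul, hSS]
    have hSdetne : S.det ≠ 0 := fun h => by simp [h] at hSdet; exact hAdetpos.ne' hSdet.symm
    set B : Matrix (Fin m) (Fin m) ℝ := S * M * S with hBdef
    have hBpos : B.PosDef := posdef_sandwich hM hShermitian (isUnit_iff_ne_zero.mpr hSdetne)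
    have hBtrace : B.trace = (A * M).trace := by
      rw [hBdef, Matrix.trace_mul_cycle, hSS]
    have hBdet : B.det = A.det * M.det := by
      rw [hBdef, Matrix.det_mul, Matrix.det_mul, mul_comm S.det M.det, mul_assoc,
        ← Matrix.det_mul, hSS, mul_comm]
    have hΘM : (Θ * M).trace = (1/2) * M.trace - (1/2) * (A * M).trace := by
      have : A * M = M - (2:ℝ) • (Θ * M) := by
        rw [hAdef, Matrix.sub_mul, Matrix.one_mul, Matrix.smul_mul]
      rw [this, Matrix.trace_sub, Matrix.trace_smul]
      simp [smul_eq_mul]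
      ring
    have hlogA : Real.log A.det = Real.log B.det - Real.log M.det := by
      rw [hBdet, Real.log_mul hAdetpos.ne' hMdet.ne']
      ring
    have hkey := key_bound hBpos hδ
    rw [hΘM, hlogA, ← hBtrace]
    nlinarith [hkey]
  · -- M = δ • (δ • M⁻¹)⁻¹
    rw [hA0]
    have hinv : (δ • M⁻¹)⁻¹ = δ⁻¹ • M := by
      apply Matrix.inv_eq_right_inv
      rw [Matrix.smul_mul, Matrix.mul_smul, hMinvM, smul_smul]
      simp [hδ.ne']
    rw [hinv, smul_smul]
    simp [hδ.ne']
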